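/- Let d ≥ 2. There exists a constant C > 0 such that for all λ ∈ (0,1), sup over ℓ ∈ ℝ^d of ∫_{S^{d−1}} (|ℓ − ω|² + λ²)^{−(d−1)/2} dσ(ω) ≤ C(1 + log(1/λ)), where dσ is the surface measure on the unit sphere S^{d−1} ⊂ ℝ^d. -/

import Mathlib

open Real MeasureTheory Set Metric Pointwise
open scoped ENNReal

lemma cap_bound (d : ℕ) (hd : 1 ≤ d) (p : EuclideanSpace ℝ (Fin d)) (hp : ‖p‖ = 1)
    (r : ℝ) (hr : 0 ≤ r) :
    (volume : Measure (EuclideanSpace ℝ (Fin d))).toSphere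
      {ω : Metric.sphere (0 : EuclideanSpace ℝ (Fin d)) 1 | ‖p - (ω : EuclideanSpace ℝ (Fin d))‖ ≤ r}
      ≤ ENNReal.ofReal ((d : ℝ) * (2 * (2 * r) ^ (d - 1))) := by
  haveI : NeZero d := ⟨by omega⟩
  have hzero : (0 : Fin d) = ⟨0, hd⟩ := rfl
  -- orthonormal basis with b 0 = p
  have hcard : Module.finrank ℝ (EuclideanSpace ℝ (Fin d)) = Fintype.card (Fin d) := by
    simp [finrank_euclideanSpace_fin]
  have horth : Orthonormal ℝ (Set.restrict ({0} : Set (Fin d)) (fun _ : Fin d => p)) := by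
    constructor
    · intro i; exact hp
    · intro i j hij
      exact absurd (Subtype.ext ((Set.mem_singleton_iff.1 i.2).trans
        (Set.mem_singleton_iff.1 j.2).symm)) hij
  obtain ⟨b, hb⟩ := horth.exists_orthonormalBasis_extension_of_card_eq hcard
  have hb0 : b 0 = p := hb 0 rfl
  set cap : Set (Metric.sphere (0 : EuclideanSpace ℝ (Fin d)) 1) :=
    {ω | ‖p - (ω : EuclideanSpace ℝ (Fin d))‖ ≤ r} with hcap
  have hms : MeasurableSet cap := by
    have : IsClosed cap := isClosed_le (by fun_prop) continuous_const
    exact this.measurableSet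
  rw [Measure.toSphere_apply' _ hms]
  -- the box
  set B : Set (Fin d → ℝ) := Set.pi Set.univ (fun i => if i = 0 then Icc (-1 : ℝ) 1 else Icc (-r) r)
    with hB
  set φ : EuclideanSpace ℝ (Fin d) → (Fin d → ℝ) :=
    (WithLp.ofLp) ∘ b.repr with hφ
  have hφmp : MeasurePreserving φ volume volume :=
    (PiLp.volume_preserving_ofLp (Fin d)).comp b.measurePreserving_repr
  have hsub : (Ioo (0:ℝ) 1) • (Subtype.val '' cap) ⊆ φ ⁻¹' B := by
    rintro x hx
    rw [Set.mem_smul] at hx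
    obtain ⟨c, hc, ω, hω, rfl⟩ := hx
    obtain ⟨ω, hωcap, rfl⟩ := hω
    have hωnorm : ‖(ω : EuclideanSpace ℝ (Fin d))‖ = 1 := by
      have := ω.2; rwa [mem_sphere_zero_iff_norm] at this
    intro i _
    have hrepr : φ (c • (ω : EuclideanSpace ℝ (Fin d))) i
        = c * (inner ℝ (b i) (ω : EuclideanSpace ℝ (Fin d)) : ℝ) := by
      simp [hφ, b.repr_apply_apply, real_inner_smul_right]
    dsimp only
    by_cases h0 : i = 0
    · subst h0
      rw [if_pos rfl, hrepr, hb0]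
      have h1 : |(inner ℝ p (ω : EuclideanSpace ℝ (Fin d)) : ℝ)| ≤ 1 := by
        calc |(inner ℝ p (ω : EuclideanSpace ℝ (Fin d)) : ℝ)| ≤ ‖p‖ * ‖(ω : EuclideanSpace ℝ (Fin d))‖ :=
          abs_real_inner_le_norm _ _
        _ = 1 := by rw [hp, hωnorm, mul_one]
      have : |c * (inner ℝ p (ω : EuclideanSpace ℝ (Fin d)) : ℝ)| ≤ 1 := by
        rw [abs_mul, abs_of_pos hc.1]
        calc c * |(inner ℝ p (ω : EuclideanSpace ℝ (Fin d)) : ℝ)| ≤ 1 * 1 :=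
          mul_le_mul hc.2.le h1 (abs_nonneg _) zero_le_one
        _ = 1 := one_mul 1
      exact Set.mem_Icc.2 (abs_le.1 this)
    · rw [if_neg h0]
      rw [hrepr]
      have hper : (inner ℝ (b i) p : ℝ) = 0 := by
        rw [← hb0]; exact b.orthonormal.2 h0
      have hsplit : (inner ℝ (b i) (ω : EuclideanSpace ℝ (Fin d)) : ℝ)
          = (inner ℝ (b i) ((ω : EuclideanSpace ℝ (Fin d)) - p) : ℝ) := by
        rw [inner_sub_right, hper, sub_zero]
      have h1 : |(inner ℝ (b i) (ω : EuclideanSpace ℝ (Fin d)) : ℝ)| ≤ r := by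
        rw [hsplit]
        calc |(inner ℝ (b i) ((ω : EuclideanSpace ℝ (Fin d)) - p) : ℝ)|
            ≤ ‖b i‖ * ‖(ω : EuclideanSpace ℝ (Fin d)) - p‖ := abs_real_inner_le_norm _ _
          _ = ‖p - (ω : EuclideanSpace ℝ (Fin d))‖ := by
              rw [b.orthonormal.1 i, one_mul, norm_sub_rev]
          _ ≤ r := hωcap
      have : |c * (inner ℝ (b i) (ω : EuclideanSpace ℝ (Fin d)) : ℝ)| ≤ r := by
        rw [abs_mul, abs_of_pos hc.1]
        calc c * |(inner ℝ (b i) (ω : EuclideanSpace ℝ (Fin d)) : ℝ)| ≤ 1 * r :=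
          mul_le_mul hc.2.le h1 (abs_nonneg _) zero_le_one
        _ = r := one_mul r
      exact Set.mem_Icc.2 (abs_le.1 this)
  have hBmeas : MeasurableSet B := by
    apply MeasurableSet.univ_pi
    intro i
    split <;> exact measurableSet_Icc
  have hBvol : volume B = ENNReal.ofReal 2 * (ENNReal.ofReal (2 * r)) ^ (d - 1) := by
    rw [hB, volume_pi_pi]
    rw [← Finset.mul_prod_erase Finset.univ _ (Finset.mem_univ (0 : Fin d))]
    rw [if_pos rfl, Real.volume_Icc]
    have : ∀ i ∈ Finset.univ.erase (0 : Fin d),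
        volume (if i = 0 then Icc (-1 : ℝ) 1 else Icc (-r) r) = ENNReal.ofReal (2 * r) := by
      intro i hi
      rw [if_neg (Finset.ne_of_mem_erase hi), Real.volume_Icc]
      congr 1; ring
    rw [Finset.prod_congr rfl this, Finset.prod_const]
    congr 1
    · congr 1; norm_num
    · congr 1
      rw [Finset.card_erase_of_mem (Finset.mem_univ _), Finset.card_univ, Fintype.card_fin]
  calc (Module.finrank ℝ (EuclideanSpace ℝ (Fin d)) : ℝ≥0∞) * volume ((Ioo (0:ℝ) 1) • (Subtype.val '' cap))
      ≤ (d : ℝ≥0∞) * volume (φ ⁻¹' B) := by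
        rw [finrank_euclideanSpace_fin]
        exact mul_le_mul_right (measure_mono hsub) _
    _ = (d : ℝ≥0∞) * volume B := by rw [hφmp.measure_preimage hBmeas.nullMeasurableSet]
    _ ≤ ENNReal.ofReal ((d : ℝ) * (2 * (2 * r) ^ (d - 1))) := by
        rw [hBvol, ← ENNReal.ofReal_pow (by linarith), ← ENNReal.ofReal_mul (by norm_num),
          ← ENNReal.ofReal_natCast d, ← ENNReal.ofReal_mul (by positivity)]


open Real MeasureTheory

/-- For `d ≥ 2` there is `C > 0` such that for all `λ ∈ (0,1)` and all `ℓ ∈ ℝ^d`,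
`∫_{S^(d-1)} (|ℓ-ω|² + λ²)^(-(d-1)/2) dσ(ω) ≤ C(1 + log(1/λ))`, where `σ` is the
surface measure on the unit sphere. -/
theorem sphere_integral_log_bound
    (d : ℕ) (hd : 2 ≤ d) :
    ∃ C : ℝ, 0 < C ∧
      ∀ lam : ℝ, lam ∈ Set.Ioo (0 : ℝ) 1 →
        ∀ l : EuclideanSpace ℝ (Fin d),
          (∫ ω : Metric.sphere (0 : EuclideanSpace ℝ (Fin d)) 1,
              (‖l - (ω : EuclideanSpace ℝ (Fin d))‖ ^ 2 + lam ^ 2) ^ (-((d : ℝ) - 1) / 2)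
            ∂((volume : Measure (EuclideanSpace ℝ (Fin d))).toSphere))
          ≤ C * (1 + Real.log (1 / lam)) := by
  set σ := (volume : Measure (EuclideanSpace ℝ (Fin d))).toSphere with hσ
  set q : ℕ := d - 1 with hqdef
  have hq1 : 1 ≤ q := by omega
  have hq0 : (0:ℝ) < q := by exact_mod_cast hq1
  have hqcast : (q : ℝ) = (d : ℝ) - 1 := by
    rw [hqdef, Nat.cast_sub (by omega)]; norm_num
  set M : ℝ≥0∞ := σ univ with hM
  have hMfin : M ≠ ∞ := measure_ne_top σ univ
  set A : ℝ := (d : ℝ) * (2 * 4 ^ q) with hA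
  have hA0 : 0 < A := by positivity
  refine ⟨M.toReal + A * q + 1, by positivity, ?_⟩
  intro lam hlam l
  set L := Real.log (1 / lam) with hLdef
  have hL0 : 0 ≤ L := Real.log_nonneg (one_le_one_div hlam.1 hlam.2.le)
  set T : ℝ := lam ^ (-(q:ℝ)) with hT
  have hT1 : 1 < T := by
    rw [hT]
    exact Real.one_lt_rpow_iff_of_pos hlam.1 |>.2 (Or.inr ⟨hlam.2, by linarith⟩)
  set f : Metric.sphere (0 : EuclideanSpace ℝ (Fin d)) 1 → ℝ :=
    fun ω => (‖l - (ω : EuclideanSpace ℝ (Fin d))‖ ^ 2 + lam ^ 2) ^ (-((d : ℝ) - 1) / 2) with hf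
  have hbase : ∀ ω, (0:ℝ) < ‖l - (ω : EuclideanSpace ℝ (Fin d))‖ ^ 2 + lam ^ 2 := by
    intro ω; have := hlam.1; positivity
  have hfpos : ∀ ω, 0 < f ω := fun ω => Real.rpow_pos_of_pos (hbase ω) _
  have hfc : Continuous f := by
    apply Continuous.rpow_const
    · fun_prop
    · intro ω; exact Or.inl (ne_of_gt (hbase ω))
  -- Bochner integral to lintegral
  rw [integral_eq_lintegral_of_nonneg_ae (Filter.Eventually.of_forall fun ω => (hfpos ω).le)
    hfc.aestronglyMeasurable]
  -- layer cake
  rw [lintegral_eq_lintegral_meas_lt σ (Filter.Eventually.of_forall fun ω => (hfpos ω).le)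
    hfc.measurable.aemeasurable]
  -- pointwise superlevel bound
  have key : ∀ t ∈ Ioi (0:ℝ), σ {ω | t < f ω} ≤
      (Ioc (0:ℝ) 1).indicator (fun _ => M) t
        + (Ioo (1:ℝ) T).indicator (fun s => ENNReal.ofReal (A / s)) t := by
    intro t ht
    rw [mem_Ioi] at ht
    by_cases ht1 : t ≤ 1
    · refine le_trans ?_ le_self_add
      rw [Set.indicator_of_mem (Set.mem_Ioc.2 ⟨ht, ht1⟩)]
      exact measure_mono (subset_univ _)
    push_neg at ht1
    set rt : ℝ := t ^ (-(1:ℝ)/(q:ℝ)) with hrt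
    have hrt0 : 0 < rt := Real.rpow_pos_of_pos ht _
    have hfacts : ∀ ω : Metric.sphere (0 : EuclideanSpace ℝ (Fin d)) 1, t < f ω →
        ‖l - (ω : EuclideanSpace ℝ (Fin d))‖ < rt ∧ lam < rt := by
      intro ω hω
      set X := ‖l - (ω : EuclideanSpace ℝ (Fin d))‖ ^ 2 + lam ^ 2 with hX
      have hX0 : 0 < X := hbase ω
      have h1 : X < t ^ (-(2:ℝ)/(q:ℝ)) := by
        have := Real.rpow_lt_rpow_of_neg ht hω (by
          show -(2:ℝ)/(q:ℝ) < 0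
          exact div_neg_of_neg_of_pos (by norm_num) hq0)
        have hexp : -((d : ℝ) - 1) / 2 * (-(2:ℝ)/(q:ℝ)) = 1 := by
          rw [← hqcast]; field_simp
        calc X = (X ^ (-((d : ℝ) - 1) / 2)) ^ (-(2:ℝ)/(q:ℝ)) := by
              rw [← Real.rpow_mul hX0.le, hexp, Real.rpow_one]
          _ < t ^ (-(2:ℝ)/(q:ℝ)) := this
      have hrtsq : rt ^ 2 = t ^ (-(2:ℝ)/(q:ℝ)) := by
        rw [hrt, ← Real.rpow_natCast (t ^ (-(1:ℝ)/(q:ℝ))) 2, ← Real.rpow_mul ht.le]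
        norm_num
        ring_nf
      constructor
      · refine lt_of_pow_lt_pow_left₀ 2 hrt0.le ?_
        calc ‖l - (ω : EuclideanSpace ℝ (Fin d))‖ ^ 2 ≤ X := by rw [hX]; nlinarith [hlam.1]
          _ < rt ^ 2 := by rw [hrtsq]; exact h1
      · refine lt_of_pow_lt_pow_left₀ 2 hrt0.le ?_
        calc lam ^ 2 ≤ X := by rw [hX]; nlinarith [norm_nonneg (l - (ω : EuclideanSpace ℝ (Fin d)))]
          _ < rt ^ 2 := by rw [hrtsq]; exact h1
    rcases Set.eq_empty_or_nonempty {ω | t < f ω} with hset | ⟨ω₀, hω₀⟩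
    · rw [hset]; simp
    have htT : t < T := by
      have hlamrt : lam < rt := (hfacts ω₀ hω₀).2
      have := Real.rpow_lt_rpow_of_neg hlam.1 hlamrt (show -(q:ℝ) < 0 by linarith)
      calc t = (rt) ^ (-(q:ℝ)) := by
            rw [hrt, ← Real.rpow_mul ht.le]
            rw [show -(1:ℝ)/(q:ℝ) * (-(q:ℝ)) = 1 by field_simp]
            rw [Real.rpow_one]
        _ < lam ^ (-(q:ℝ)) := this
    have hsubcap : {ω | t < f ω} ⊆
        {ω : Metric.sphere (0 : EuclideanSpace ℝ (Fin d)) 1 |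
          ‖(ω₀ : EuclideanSpace ℝ (Fin d)) - (ω : EuclideanSpace ℝ (Fin d))‖ ≤ 2 * rt} := by
      intro ω hω
      have h1 := (hfacts ω hω).1
      have h0 := (hfacts ω₀ hω₀).1
      have : (ω₀ : EuclideanSpace ℝ (Fin d)) - (ω : EuclideanSpace ℝ (Fin d))
          = -(l - (ω₀ : EuclideanSpace ℝ (Fin d))) + (l - (ω : EuclideanSpace ℝ (Fin d))) := by
        abel
      rw [Set.mem_setOf_eq, this]
      calc ‖-(l - (ω₀ : EuclideanSpace ℝ (Fin d))) + (l - (ω : EuclideanSpace ℝ (Fin d)))‖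
          ≤ ‖-(l - (ω₀ : EuclideanSpace ℝ (Fin d)))‖ + ‖l - (ω : EuclideanSpace ℝ (Fin d))‖ :=
            norm_add_le _ _
        _ ≤ rt + rt := by rw [norm_neg]; exact add_le_add h0.le h1.le
        _ = 2 * rt := by ring
    have hω₀norm : ‖(ω₀ : EuclideanSpace ℝ (Fin d))‖ = 1 := by
      have := ω₀.2; rwa [mem_sphere_zero_iff_norm] at this
    have hcapest := cap_bound d (by omega) _ hω₀norm (2 * rt) (by positivity)
    have hrtq : rt ^ q = t⁻¹ := by
      rw [hrt, ← Real.rpow_natCast (t ^ (-(1:ℝ)/(q:ℝ))) q, ← Real.rpow_mul ht.le]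
      rw [show -(1:ℝ)/(q:ℝ) * (q:ℝ) = -1 by field_simp]
      exact Real.rpow_neg_one t
    have heq : (d : ℝ) * (2 * (2 * (2 * rt)) ^ (d - 1)) = A / t := by
      rw [show (2 : ℝ) * (2 * rt) = 4 * rt by ring, mul_pow, ← hqdef, hrtq, hA]
      field_simp
    refine le_trans ((measure_mono hsubcap).trans (le_of_le_of_eq hcapest (by rw [heq]))) ?_
    rw [Set.indicator_of_mem (Set.mem_Ioo.2 ⟨ht1, htT⟩)]
    exact le_add_self
  -- integrate the bound
  have hstep : ∫⁻ t in Ioi (0:ℝ), σ {ω | t < f ω} ≤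
      M + ENNReal.ofReal (A * ((q:ℝ) * L)) := by
    calc ∫⁻ t in Ioi (0:ℝ), σ {ω | t < f ω}
        ≤ ∫⁻ t in Ioi (0:ℝ), ((Ioc (0:ℝ) 1).indicator (fun _ => M) t
            + (Ioo (1:ℝ) T).indicator (fun s => ENNReal.ofReal (A / s)) t) :=
          setLIntegral_mono' measurableSet_Ioi key
      _ = (∫⁻ t in Ioi (0:ℝ), (Ioc (0:ℝ) 1).indicator (fun _ => M) t)
            + ∫⁻ t in Ioi (0:ℝ), (Ioo (1:ℝ) T).indicator (fun s => ENNReal.ofReal (A / s)) t := by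
          apply lintegral_add_left
          exact measurable_const.indicator measurableSet_Ioc
      _ ≤ M + ENNReal.ofReal (A * ((q:ℝ) * L)) := by
          gcongr
          · rw [lintegral_indicator measurableSet_Ioc _, Measure.restrict_restrict measurableSet_Ioc,
              Set.inter_eq_left.2 Ioc_subset_Ioi_self, setLIntegral_const, Real.volume_Ioc]
            simp
          · rw [lintegral_indicator measurableSet_Ioo _, Measure.restrict_restrict measurableSet_Ioo,
              Set.inter_eq_left.2 (show Ioo (1:ℝ) T ⊆ Ioi 0 from fun x hx => lt_trans one_pos hx.1)]
            have hint : IntegrableOn (fun s => A / s) (Ioo (1:ℝ) T) volume := by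
              apply (ContinuousOn.integrableOn_Icc ?_).mono_set Ioo_subset_Icc_self
              apply continuousOn_const.div continuousOn_id
              intro x hx
              have : (1:ℝ) ≤ x := hx.1
              positivity
            rw [← ofReal_integral_eq_lintegral_ofReal hint]
            · apply ENNReal.ofReal_le_ofReal
              rw [← MeasureTheory.integral_Ioc_eq_integral_Ioo,
                ← intervalIntegral.integral_of_le hT1.le]
              have h0T : (0:ℝ) ∉ Set.uIcc (1:ℝ) T := by
                rw [Set.uIcc_of_le hT1.le]
                intro h; exact absurd h.1 (by norm_num)
              apply le_of_eq
              calc ∫ s in (1:ℝ)..T, A / s = A * ∫ s in (1:ℝ)..T, 1 / s := by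
                    rw [← intervalIntegral.integral_const_mul]
                    congr 1; ext s; ring
                _ = A * Real.log T := by rw [integral_one_div h0T, div_one]
                _ = A * ((q:ℝ) * L) := by
                    rw [hT, Real.log_rpow hlam.1, hLdef, one_div, Real.log_inv]
                    ring
            · filter_upwards [ae_restrict_mem measurableSet_Ioo] with s hs
              have : (0:ℝ) < s := lt_trans one_pos hs.1
              positivity
  -- finish
  have hfin : M + ENNReal.ofReal (A * ((q:ℝ) * L)) ≠ ∞ :=
    ENNReal.add_ne_top.2 ⟨hMfin, ENNReal.ofReal_ne_top⟩
  calc (∫⁻ t in Ioi (0:ℝ), σ {ω | t < f ω}).toReal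
      ≤ (M + ENNReal.ofReal (A * ((q:ℝ) * L))).toReal := ENNReal.toReal_mono hfin hstep
    _ = M.toReal + A * ((q:ℝ) * L) := by
        rw [ENNReal.toReal_add hMfin ENNReal.ofReal_ne_top,
          ENNReal.toReal_ofReal (by positivity)]
    _ ≤ (M.toReal + A * q + 1) * (1 + L) := by
        have hMt : 0 ≤ M.toReal := ENNReal.toReal_nonneg
        nlinarith [mul_nonneg hA0.le hL0, mul_nonneg hMt hL0]
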